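/- Let A be an n×n complex matrix and define its numerical radius r(A) = sup{ |x*Ax| : x ∈ ℂⁿ, ‖x‖ = 1 }. Then r(A) = sup_{θ ∈ [0, π)} ρ(H(θ)), where H(θ) = (e^{iθ}A + e^{−iθ}A*)/2 and ρ(·) denotes the spectral radius, i.e., ρ(H(θ)) is the maximum of the absolute values of the (real) eigenvalues of the Hermitian matrix H(θ). -/

import Mathlib

open Matrix

lemma dotAH (n:ℕ) (A : Matrix (Fin n) (Fin n) ℂ) (v : Fin n → ℂ) :
    star v ⬝ᵥ Aᴴ *ᵥ v = starRingEnd ℂ (star v ⬝ᵥ A *ᵥ v) := by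
  simp only [dotProduct, mulVec, conjTranspose_apply, Pi.star_apply, starRingEnd_apply,
    star_sum, star_mul', star_star, Finset.mul_sum]
  rw [Finset.sum_comm]
  congr 1; ext i; congr 1; ext j; ring

lemma dot_self (n:ℕ) (v : Fin n → ℂ) :
    star v ⬝ᵥ v = ((∑ j, Complex.normSq (v j) : ℝ) : ℂ) := by
  push_cast
  simp only [dotProduct, Pi.star_apply]
  congr 1; ext j
  rw [show star (v j) = (starRingEnd ℂ) (v j) from rfl, mul_comm, Complex.mul_conj]

lemma eigen_dot (n:ℕ) (B : Matrix (Fin n) (Fin n) ℂ) (v : Fin n → ℂ) (c : ℂ)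
    (h : B *ᵥ v = c • v) : star v ⬝ᵥ B *ᵥ v = c * (star v ⬝ᵥ v) := by
  rw [h, dotProduct_smul, smul_eq_mul]

lemma normalize_eigen (n:ℕ) (v : Fin n → ℂ) (hv : v ≠ 0) :
    ∃ w : Fin n → ℂ, star w ⬝ᵥ w = 1 ∧
      ∀ (B : Matrix (Fin n) (Fin n) ℂ) (c : ℂ), B *ᵥ v = c • v → B *ᵥ w = c • w := by
  have ht : (0:ℝ) < ∑ j, Complex.normSq (v j) := by
    have hnn : (0:ℝ) ≤ ∑ j, Complex.normSq (v j) :=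
      Finset.sum_nonneg fun j _ => Complex.normSq_nonneg _
    rcases hnn.lt_or_eq with h | h
    · exact h
    · exfalso
      apply hv
      funext j
      have := (Finset.sum_eq_zero_iff_of_nonneg
        (fun j _ => Complex.normSq_nonneg (v j))).mp h.symm j (Finset.mem_univ j)
      exact Complex.normSq_eq_zero.mp this
  set t : ℝ := ∑ j, Complex.normSq (v j) with htdef
  set s : ℝ := Real.sqrt t with hsdef
  have hs : (0:ℝ) < s := Real.sqrt_pos.2 ht
  refine ⟨((s:ℂ))⁻¹ • v, ?_, ?_⟩
  · rw [star_smul, smul_dotProduct, dotProduct_smul, dot_self]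
    simp only [star_inv₀, smul_eq_mul]
    rw [← htdef]
    rw [show star ((s:ℂ)) = (s:ℂ) from Complex.conj_ofReal s]
    have hts : (t:ℂ) = (s:ℂ) * (s:ℂ) := by
      rw [← Complex.ofReal_mul]
      norm_cast
      rw [hsdef, Real.mul_self_sqrt ht.le]
    rw [hts]
    field_simp
    rw [div_self (Complex.ofReal_ne_zero.2 hs.ne')]
  · intro B c h
    rw [mulVec_smul, h, smul_comm]

lemma quad_abs_le (n:ℕ) [Nonempty (Fin n)] {B : Matrix (Fin n) (Fin n) ℂ} (hB : B.IsHermitian)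
    (v : Fin n → ℂ) (hv : star v ⬝ᵥ v = 1) :
    ‖star v ⬝ᵥ B *ᵥ v‖ ≤
      Finset.univ.sup' Finset.univ_nonempty (fun i => |hB.eigenvalues i|) := by
  set m : ℝ := Finset.univ.sup' Finset.univ_nonempty (fun i => |hB.eigenvalues i|) with hm
  set U : Matrix (Fin n) (Fin n) ℂ := (hB.eigenvectorUnitary : Matrix (Fin n) (Fin n) ℂ) with hU
  set w : Fin n → ℂ := star U *ᵥ v with hw
  have hsw : star w = star v ᵥ* U := by
    rw [hw, star_mulVec]
    congr 1
    rw [Matrix.star_eq_conjTranspose, conjTranspose_conjTranspose]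
  have hUU : U * star U = 1 := Unitary.coe_mul_star_self hB.eigenvectorUnitary
  have hww : star w ⬝ᵥ w = 1 := by
    rw [hw, dotProduct_mulVec, hsw, vecMul_vecMul, hUU, vecMul_one, hv]
  have hquad : star v ⬝ᵥ B *ᵥ v =
      star w ⬝ᵥ (diagonal (RCLike.ofReal ∘ hB.eigenvalues) *ᵥ w) := by
    conv_lhs => rw [hB.spectral_theorem, Unitary.conjStarAlgAut_apply]
    rw [← mulVec_mulVec, ← mulVec_mulVec, dotProduct_mulVec, hsw]
  set r : Fin n → ℝ := fun j => Complex.normSq (w j) with hr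
  have hdiag : star w ⬝ᵥ (diagonal (RCLike.ofReal ∘ hB.eigenvalues) *ᵥ w) =
      ((∑ j, hB.eigenvalues j * r j : ℝ) : ℂ) := by
    push_cast
    simp only [dotProduct, mulVec_diagonal, Pi.star_apply, Function.comp_apply]
    congr 1; ext j
    have h1 : star (w j) * w j = ((Complex.normSq (w j) : ℝ) : ℂ) := by
      rw [show star (w j) = (starRingEnd ℂ) (w j) from rfl, mul_comm, Complex.mul_conj]
    have h2 : (RCLike.ofReal (hB.eigenvalues j) : ℂ) = Complex.ofReal (hB.eigenvalues j) := rfl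
    rw [show star (w j) * (RCLike.ofReal (hB.eigenvalues j) * w j)
        = (RCLike.ofReal (hB.eigenvalues j) : ℂ) * (star (w j) * w j) by ring, h1, h2, hr]
  have hsum1 : (∑ j, r j) = 1 := by
    have := hww
    rw [dot_self] at this
    exact_mod_cast this
  rw [hquad, hdiag, Complex.norm_real, Real.norm_eq_abs]
  calc |∑ j, hB.eigenvalues j * r j| ≤ ∑ j, |hB.eigenvalues j * r j| :=
        Finset.abs_sum_le_sum_abs _ _
    _ = ∑ j, |hB.eigenvalues j| * r j := by
        congr 1; ext j
        rw [abs_mul, abs_of_nonneg (Complex.normSq_nonneg _)]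
    _ ≤ ∑ j, m * r j := Finset.sum_le_sum fun j _ =>
        mul_le_mul_of_nonneg_right (Finset.le_sup' (fun i => |hB.eigenvalues i|) (Finset.mem_univ j))
          (Complex.normSq_nonneg _)
    _ = m * ∑ j, r j := by rw [← Finset.mul_sum]
    _ = m := by rw [hsum1, mul_one]

lemma exists_attain (n:ℕ) [Nonempty (Fin n)] {B : Matrix (Fin n) (Fin n) ℂ}
    (hB : B.IsHermitian) :
    ∃ c : ℝ, |c| = Finset.univ.sup' Finset.univ_nonempty (fun i => |hB.eigenvalues i|) ∧
      ∃ v : Fin n → ℂ, v ≠ 0 ∧ B *ᵥ v = ((c:ℝ):ℂ) • v := by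
  obtain ⟨i, -, hi⟩ := Finset.exists_mem_eq_sup' Finset.univ_nonempty
    (fun i => |hB.eigenvalues i|)
  refine ⟨hB.eigenvalues i, hi.symm, ⇑(hB.eigenvectorBasis i), ?_, ?_⟩
  · intro h
    exact hB.eigenvectorBasis.orthonormal.ne_zero i (by ext j; exact congrFun h j)
  · rw [hB.mulVec_eigenvectorBasis]
    funext j
    simp [Complex.real_smul]


lemma quadH (n:ℕ) (θ : ℝ) (A : Matrix (Fin n) (Fin n) ℂ) (v : Fin n → ℂ)
    (hv : star v ⬝ᵥ v = 1) :
    star v ⬝ᵥ ((2⁻¹ : ℂ) • (Complex.exp ((θ : ℂ) * Complex.I) • A +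
        Complex.exp (-(θ : ℂ) * Complex.I) • Aᴴ)) *ᵥ v
      = (((Complex.exp ((θ : ℂ) * Complex.I) * (star v ⬝ᵥ A *ᵥ v)).re : ℝ) : ℂ) := by
  have hexp : Complex.exp (-(θ:ℂ) * Complex.I)
      = starRingEnd ℂ (Complex.exp ((θ:ℂ) * Complex.I)) := by
    rw [← Complex.exp_conj, _root_.map_mul, Complex.conj_I, Complex.conj_ofReal, mul_neg, neg_mul]
  rw [smul_mulVec, add_mulVec, smul_mulVec, smul_mulVec, dotProduct_smul,
    dotProduct_add, dotProduct_smul, dotProduct_smul, dotAH, hexp]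
  set e := Complex.exp ((θ:ℂ) * Complex.I) with he
  set z := star v ⬝ᵥ A *ᵥ v with hz
  simp only [smul_eq_mul]
  rw [show (starRingEnd ℂ) e * (starRingEnd ℂ) z = (starRingEnd ℂ) (e * z) from
    (_root_.map_mul _ _ _).symm, Complex.add_conj]
  push_cast
  ring


lemma crude (n:ℕ) (A : Matrix (Fin n) (Fin n) ℂ) (v : Fin n → ℂ) (hv : star v ⬝ᵥ v = 1) :
    ‖star v ⬝ᵥ A *ᵥ v‖ ≤ ∑ i, ∑ j, ‖A i j‖ := by
  have h1 : (∑ j, Complex.normSq (v j)) = 1 := by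
    have := hv; rw [dot_self] at this; exact_mod_cast this
  have hb : ∀ i, ‖v i‖ ≤ 1 := by
    intro i
    have h2 : Complex.normSq (v i) ≤ 1 := by
      rw [← h1]
      exact Finset.single_le_sum (fun j _ => Complex.normSq_nonneg (v j)) (Finset.mem_univ i)
    rw [← Complex.sq_norm] at h2
    nlinarith [norm_nonneg (v i)]
  calc ‖star v ⬝ᵥ A *ᵥ v‖ ≤ ∑ i, ‖star v i * (A *ᵥ v) i‖ :=
        norm_sum_le _ _
    _ = ∑ i, ‖v i‖ * ‖(A *ᵥ v) i‖ := by
        congr 1; ext i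
        rw [norm_mul]
        congr 1
        exact norm_star _
    _ ≤ ∑ i, 1 * (∑ j, ‖A i j‖) := by
        refine Finset.sum_le_sum fun i _ => ?_
        refine mul_le_mul (hb i) ?_ (norm_nonneg _) zero_le_one
        calc ‖∑ j, A i j * v j‖ ≤ ∑ j, ‖A i j * v j‖ :=
              norm_sum_le _ _
          _ ≤ ∑ j, ‖A i j‖ := Finset.sum_le_sum fun j _ => by
              rw [norm_mul]
              exact mul_le_of_le_one_right (norm_nonneg _) (hb j)
    _ = ∑ i, ∑ j, ‖A i j‖ := by simp

/-- equation (2.6). The numerical radius equals the supremum over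
`θ ∈ [0, π)` of the spectral radius of the Hermitian matrix
`H(θ) = (e^{iθ}A + e^{-iθ}A*)/2`.  Here "`x` is the spectral radius of `H(θ)`" is
expressed by: some real eigenvalue of `H(θ)` has absolute value `x`, and every real
eigenvalue of `H(θ)` has absolute value at most `x` (a Hermitian matrix has only real
eigenvalues). -/
theorem numerical_radius_eq_sup_specrad (n : ℕ) (A : Matrix (Fin n) (Fin n) ℂ)
    (H : ℝ → Matrix (Fin n) (Fin n) ℂ)
    (hH : ∀ θ : ℝ, H θ = (2⁻¹ : ℂ) •
      (Complex.exp ((θ : ℂ) * Complex.I) • A + Complex.exp (-(θ : ℂ) * Complex.I) • Aᴴ)) :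
    sSup {x : ℝ | ∃ v : Fin n → ℂ, star v ⬝ᵥ v = 1 ∧
        x = ‖star v ⬝ᵥ A.mulVec v‖} =
    sSup {x : ℝ | ∃ θ : ℝ, 0 ≤ θ ∧ θ < Real.pi ∧
      (∃ c : ℝ, |c| = x ∧ ∃ v : Fin n → ℂ, v ≠ 0 ∧ (H θ).mulVec v = (c : ℂ) • v) ∧
      (∀ c : ℝ, (∃ v : Fin n → ℂ, v ≠ 0 ∧ (H θ).mulVec v = (c : ℂ) • v) → |c| ≤ x)} := by
  rcases Nat.eq_zero_or_pos n with hn | hn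
  · subst hn
    have e1 : {x : ℝ | ∃ v : Fin 0 → ℂ, star v ⬝ᵥ v = 1 ∧
        x = ‖star v ⬝ᵥ A.mulVec v‖} = ∅ := by
      ext x
      simp only [Set.mem_setOf_eq, Set.mem_empty_iff_false, iff_false]
      rintro ⟨v, hv, -⟩
      simp [dotProduct] at hv
    have e2 : {x : ℝ | ∃ θ : ℝ, 0 ≤ θ ∧ θ < Real.pi ∧
        (∃ c : ℝ, |c| = x ∧ ∃ v : Fin 0 → ℂ, v ≠ 0 ∧ (H θ).mulVec v = (c : ℂ) • v) ∧
        (∀ c : ℝ, (∃ v : Fin 0 → ℂ, v ≠ 0 ∧ (H θ).mulVec v = (c : ℂ) • v) → |c| ≤ x)} = ∅ := by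
      ext x
      simp only [Set.mem_setOf_eq, Set.mem_empty_iff_false, iff_false]
      rintro ⟨θ, -, -, ⟨c, -, v, hv0, -⟩, -⟩
      exact hv0 (Subsingleton.elim v 0)
    rw [e1, e2]
  · haveI : Nonempty (Fin n) := ⟨⟨0, hn⟩⟩
    have hconj : ∀ t : ℝ, (starRingEnd ℂ) (Complex.exp ((t:ℂ) * Complex.I))
        = Complex.exp (-(t:ℂ) * Complex.I) := by
      intro t
      rw [← Complex.exp_conj, _root_.map_mul, Complex.conj_I, Complex.conj_ofReal, mul_neg,
        neg_mul]
    have hconj' : ∀ t : ℝ, (starRingEnd ℂ) (Complex.exp (-(t:ℂ) * Complex.I))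
        = Complex.exp ((t:ℂ) * Complex.I) := by
      intro t
      have := hconj (-t)
      push_cast at this
      rw [this, neg_neg]
    have hHerm : ∀ θ : ℝ, (H θ).IsHermitian := by
      intro θ
      show (H θ)ᴴ = H θ
      rw [hH θ, conjTranspose_smul, conjTranspose_add, conjTranspose_smul, conjTranspose_smul,
        conjTranspose_conjTranspose]
      rw [show (star (2⁻¹ : ℂ)) = (2⁻¹ : ℂ) by norm_num]
      rw [show star (Complex.exp ((θ:ℂ) * Complex.I)) = Complex.exp (-(θ:ℂ) * Complex.I) from
        hconj θ]
      rw [show star (Complex.exp (-(θ:ℂ) * Complex.I)) = Complex.exp ((θ:ℂ) * Complex.I) from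
        hconj' θ]
      rw [add_comm]
    -- membership of the spectral radius in the RHS set
    have memS2 : ∀ θ : ℝ, 0 ≤ θ → θ < Real.pi →
        (∃ θ' : ℝ, 0 ≤ θ' ∧ θ' < Real.pi ∧
          (∃ c : ℝ, |c| = (Finset.univ.sup' Finset.univ_nonempty
              fun i => |(hHerm θ).eigenvalues i|) ∧
            ∃ v : Fin n → ℂ, v ≠ 0 ∧ (H θ').mulVec v = (c : ℂ) • v) ∧
          (∀ c : ℝ, (∃ v : Fin n → ℂ, v ≠ 0 ∧ (H θ').mulVec v = (c : ℂ) • v) →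
            |c| ≤ (Finset.univ.sup' Finset.univ_nonempty
              fun i => |(hHerm θ).eigenvalues i|))) := by
      intro θ h1 h2
      refine ⟨θ, h1, h2, ?_, ?_⟩
      · obtain ⟨c, hc, v, hv0, hv⟩ := exists_attain n (hHerm θ)
        exact ⟨c, hc, v, hv0, hv⟩
      · rintro c ⟨v, hv0, hv⟩
        obtain ⟨w, hw1, hw2⟩ := normalize_eigen n v hv0
        have h3 := eigen_dot n (H θ) w (c:ℂ) (hw2 _ _ hv)
        rw [hw1, mul_one] at h3
        have h4 := quad_abs_le n (hHerm θ) w hw1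
        rw [h3, Complex.norm_real, Real.norm_eq_abs] at h4
        exact h4
    -- any element of the RHS set is dominated by a numerical-range value
    have S2ub : ∀ x : ℝ, (∃ θ : ℝ, 0 ≤ θ ∧ θ < Real.pi ∧
        (∃ c : ℝ, |c| = x ∧ ∃ v : Fin n → ℂ, v ≠ 0 ∧ (H θ).mulVec v = (c : ℂ) • v) ∧
        (∀ c : ℝ, (∃ v : Fin n → ℂ, v ≠ 0 ∧ (H θ).mulVec v = (c : ℂ) • v) → |c| ≤ x)) →
        ∃ w : Fin n → ℂ, star w ⬝ᵥ w = 1 ∧ x ≤ ‖star w ⬝ᵥ A *ᵥ w‖ := by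
      rintro x ⟨θ, -, -, ⟨c, hc, v, hv0, hv⟩, -⟩
      obtain ⟨w, hw1, hw2⟩ := normalize_eigen n v hv0
      have h3 := eigen_dot n (H θ) w (c:ℂ) (hw2 _ _ hv)
      rw [hw1, mul_one] at h3
      have h4 : star w ⬝ᵥ (H θ) *ᵥ w =
          (((Complex.exp ((θ:ℂ) * Complex.I) * (star w ⬝ᵥ A *ᵥ w)).re : ℝ) : ℂ) := by
        rw [hH θ]
        exact quadH n θ A w hw1
      rw [h4] at h3
      have h5 : (Complex.exp ((θ:ℂ) * Complex.I) * (star w ⬝ᵥ A *ᵥ w)).re = c :=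
        Complex.ofReal_inj.mp h3
      refine ⟨w, hw1, ?_⟩
      rw [← hc, ← h5]
      calc |(Complex.exp ((θ:ℂ) * Complex.I) * (star w ⬝ᵥ A *ᵥ w)).re|
          ≤ ‖Complex.exp ((θ:ℂ) * Complex.I) * (star w ⬝ᵥ A *ᵥ w)‖ :=
            Complex.abs_re_le_norm _
        _ = ‖star w ⬝ᵥ A *ᵥ w‖ := by
            rw [norm_mul, Complex.norm_exp_ofReal_mul_I, one_mul]
    have bdd1 : BddAbove {x : ℝ | ∃ v : Fin n → ℂ, star v ⬝ᵥ v = 1 ∧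
        x = ‖star v ⬝ᵥ A.mulVec v‖} := by
      refine ⟨∑ i, ∑ j, ‖A i j‖, ?_⟩
      rintro x ⟨v, hv, rfl⟩
      exact crude n A v hv
    have bdd2 : BddAbove {x : ℝ | ∃ θ : ℝ, 0 ≤ θ ∧ θ < Real.pi ∧
        (∃ c : ℝ, |c| = x ∧ ∃ v : Fin n → ℂ, v ≠ 0 ∧ (H θ).mulVec v = (c : ℂ) • v) ∧
        (∀ c : ℝ, (∃ v : Fin n → ℂ, v ≠ 0 ∧ (H θ).mulVec v = (c : ℂ) • v) → |c| ≤ x)} := by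
      refine ⟨∑ i, ∑ j, ‖A i j‖, ?_⟩
      intro x hx
      obtain ⟨w, hw1, hle⟩ := S2ub x hx
      exact hle.trans (crude n A w hw1)
    have ne1 : {x : ℝ | ∃ v : Fin n → ℂ, star v ⬝ᵥ v = 1 ∧
        x = ‖star v ⬝ᵥ A.mulVec v‖}.Nonempty := by
      refine ⟨_, Pi.single ⟨0, hn⟩ 1, ?_, rfl⟩
      simp [dotProduct, Pi.single_apply, apply_ite]
    have ne2 : {x : ℝ | ∃ θ : ℝ, 0 ≤ θ ∧ θ < Real.pi ∧
        (∃ c : ℝ, |c| = x ∧ ∃ v : Fin n → ℂ, v ≠ 0 ∧ (H θ).mulVec v = (c : ℂ) • v) ∧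
        (∀ c : ℝ, (∃ v : Fin n → ℂ, v ≠ 0 ∧ (H θ).mulVec v = (c : ℂ) • v) → |c| ≤ x)}.Nonempty :=
      ⟨_, memS2 0 le_rfl Real.pi_pos⟩
    apply le_antisymm
    · refine csSup_le ne1 ?_
      rintro x ⟨v, hv, rfl⟩
      set z := star v ⬝ᵥ A *ᵥ v with hz
      have h0 : Complex.exp ((↑(-z.arg) : ℂ) * Complex.I) * z = ((‖z‖ : ℝ) : ℂ) := by
        have hadd : ((z.arg : ℂ) * Complex.I) + ((↑(-z.arg) : ℂ) * Complex.I) = 0 := by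
          push_cast; ring
        calc Complex.exp ((↑(-z.arg) : ℂ) * Complex.I) * z
            = Complex.exp ((↑(-z.arg) : ℂ) * Complex.I) *
              (↑(‖z‖) * Complex.exp ((z.arg : ℂ) * Complex.I)) := by
              rw [Complex.norm_mul_exp_arg_mul_I z]
          _
            = ↑(‖z‖) *
              Complex.exp (((z.arg : ℂ) * Complex.I) + ((↑(-z.arg) : ℂ) * Complex.I)) := by
              rw [Complex.exp_add]; ring
          _ = ((‖z‖ : ℝ) : ℂ) := by rw [hadd, Complex.exp_zero, mul_one]
      set θ₀ : ℝ := -z.arg with hθ₀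
      set k : ℤ := ⌊θ₀ / Real.pi⌋ with hk
      set θ' : ℝ := θ₀ - Real.pi * k with hθ'
      have hπ := Real.pi_pos
      have hkle : (k : ℝ) * Real.pi ≤ θ₀ := (le_div_iff₀ hπ).mp (Int.floor_le (θ₀ / Real.pi))
      have hklt : θ₀ < ((k : ℝ) + 1) * Real.pi := by
        have := (div_lt_iff₀ hπ).mp (Int.lt_floor_add_one (θ₀ / Real.pi))
        push_cast at this ⊢
        linarith
      have hθ'0 : 0 ≤ θ' := by rw [hθ']; nlinarith
      have hθ'π : θ' < Real.pi := by rw [hθ']; nlinarith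
      have hsplit : Complex.exp ((θ₀:ℂ) * Complex.I)
          = Complex.exp ((θ':ℂ) * Complex.I) * ((-1:ℂ)) ^ k := by
        have harg : (θ₀ : ℂ) * Complex.I
            = (θ':ℂ) * Complex.I + (k:ℂ) * ((Real.pi : ℂ) * Complex.I) := by
          rw [hθ']; push_cast; ring
        rw [harg, Complex.exp_add, Complex.exp_int_mul, Complex.exp_pi_mul_I]
      have h1 : Complex.exp ((θ':ℂ) * Complex.I) * z * ((-1:ℂ))^k
          = ((‖z‖ : ℝ) : ℂ) := by
        rw [← h0, hsplit]; ring
      have hre : |(Complex.exp ((θ':ℂ) * Complex.I) * z).re| = ‖z‖ := by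
        rcases Int.even_or_odd k with hek | hok
        · rw [hek.neg_one_zpow, mul_one] at h1
          rw [h1, Complex.ofReal_re, abs_of_nonneg (norm_nonneg z)]
        · rw [hok.neg_one_zpow, mul_neg_one, neg_eq_iff_eq_neg] at h1
          rw [h1]
          simp [abs_of_nonneg (norm_nonneg z)]
      have hq : star v ⬝ᵥ (H θ') *ᵥ v =
          (((Complex.exp ((θ':ℂ) * Complex.I) * z).re : ℝ) : ℂ) := by
        rw [hH θ']
        exact quadH n θ' A v hv
      have h4 := quad_abs_le n (hHerm θ') v hv
      rw [hq, Complex.norm_real, Real.norm_eq_abs, hre] at h4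
      exact h4.trans (le_csSup bdd2 (memS2 θ' hθ'0 hθ'π))
    · refine csSup_le ne2 ?_
      intro x hx
      obtain ⟨w, hw1, hle⟩ := S2ub x hx
      exact hle.trans (le_csSup bdd1 ⟨w, hw1, rfl⟩)
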